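/- arXiv:1106.5519 — 2 statements merged into one kernel-verified Lean document; each statement's English description precedes it below -/
import Mathlib

section
/- Let n be a positive integer and let T = ℝⁿ/ℤⁿ be the torus, with quotient map π : ℝⁿ → T. For every finite family S₁, …, S_k of polyhedral subsets of T, the intersection S₁ ∩ ⋯ ∩ S_k is a polyhedral subset of T. -/
open Set Pointwise

/-- The integer lattice ℤⁿ as an additive subgroup of ℝⁿ. -/
def intLattice (n : ℕ) : AddSubgroup (Fin n → ℝ) where
  carrier := {x | ∀ i, ∃ m : ℤ, x i = (m : ℝ)}
  zero_mem' := fun i => ⟨0, by simp⟩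
  add_mem' := by
    intro x y hx hy i
    obtain ⟨a, ha⟩ := hx i
    obtain ⟨b, hb⟩ := hy i
    exact ⟨a + b, by simp [Pi.add_apply, ha, hb]⟩
  neg_mem' := by
    intro x hx i
    obtain ⟨a, ha⟩ := hx i
    exact ⟨-a, by simp [Pi.neg_apply, ha]⟩

/-- The torus T = ℝⁿ/ℤⁿ, with the quotient topology. -/
abbrev Torus (n : ℕ) := (Fin n → ℝ) ⧸ intLattice n

/-- The quotient map π : ℝⁿ → T. -/
def torusPi (n : ℕ) : (Fin n → ℝ) → Torus n := QuotientAddGroup.mk' (intLattice n)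

/-- A polytope in ℝⁿ is the convex hull of a finite set of points. -/
def IsPolytope {n : ℕ} (P : Set (Fin n → ℝ)) : Prop :=
  ∃ s : Finset (Fin n → ℝ), P = convexHull ℝ (s : Set (Fin n → ℝ))

/-- A finite union of polytopes in ℝⁿ. -/
def IsFinUnionOfPolytopes {n : ℕ} (A : Set (Fin n → ℝ)) : Prop :=
  ∃ (k : ℕ) (P : Fin k → Set (Fin n → ℝ)), (∀ i, IsPolytope (P i)) ∧ A = ⋃ i, P i

/-- A subset of the torus is polyhedral if it is the image under π of a
finite union of polytopes in ℝⁿ. -/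
def IsPolyhedral {n : ℕ} (S : Set (Torus n)) : Prop :=
  ∃ A : Set (Fin n → ℝ), IsFinUnionOfPolytopes A ∧ S = torusPi n '' A


section PolyAux
open Finset

section Slice
variable {E : Type*} [AddCommGroup E] [Module ℝ E]

noncomputable def slicePt (f : E →ₗ[ℝ] ℝ) (c : ℝ) (a b : E) : E :=
  if f a = f b then a else ((f b - c)/(f b - f a)) • a + ((c - f a)/(f b - f a)) • b

lemma slicePt_self (f : E →ₗ[ℝ] ℝ) (c : ℝ) (a : E) : slicePt f c a a = a := by
  rw [slicePt, if_pos rfl]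

lemma slicePt_eq_of_lt {f : E →ₗ[ℝ] ℝ} {c : ℝ} {a b : E} (h : f a < f b) :
    slicePt f c a b = ((f b - c)/(f b - f a)) • a + ((c - f a)/(f b - f a)) • b := by
  rw [slicePt, if_neg (ne_of_lt h)]

lemma slicePt_mem {f : E →ₗ[ℝ] ℝ} {c : ℝ} {a b : E} {s : Set E}
    (ha : a ∈ s) (hb : b ∈ s) (h1 : f a ≤ c) (h2 : c ≤ f b) :
    slicePt f c a b ∈ convexHull ℝ s ∩ {x | f x = c} := by
  rcases eq_or_lt_of_le (h1.trans h2) with he | hlt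
  · have hc : f a = c := le_antisymm h1 (he ▸ h2)
    rw [slicePt, if_pos he]
    exact ⟨subset_convexHull ℝ s ha, hc⟩
  · have hd : f b - f a ≠ 0 := sub_ne_zero.2 (ne_of_gt hlt)
    have hd' : (0:ℝ) < f b - f a := sub_pos.2 hlt
    rw [slicePt_eq_of_lt hlt]
    constructor
    · refine (convex_convexHull ℝ s) (subset_convexHull ℝ s ha) (subset_convexHull ℝ s hb)
        (div_nonneg (by linarith) hd'.le) (div_nonneg (by linarith) hd'.le) ?_
      field_simp
      ring
    · show f _ = c
      rw [map_add, map_smul, map_smul]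
      have key : ((f b - c) / (f b - f a)) * f a + ((c - f a) / (f b - f a)) * f b = c := by
        rw [div_mul_eq_mul_div, div_mul_eq_mul_div, ← add_div, div_eq_iff hd]; ring
      exact key


lemma sum_trichotomy {β : Type*} [AddCommMonoid β] (s : Finset E) (f : E → ℝ) (c : ℝ)
    (g : E → β) :
    ∑ y ∈ s, g y = ∑ y ∈ s.filter (fun y => f y < c), g y
      + ∑ y ∈ s.filter (fun y => f y = c), g y
      + ∑ y ∈ s.filter (fun y => c < f y), g y := by
  classical
  rw [← Finset.sum_filter_add_sum_filter_not s (fun y => f y < c) g, add_assoc]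
  congr 1
  rw [← Finset.sum_filter_add_sum_filter_not (s.filter (fun y => ¬ f y < c))
    (fun y => f y = c) g]
  congr 1
  · apply Finset.sum_congr _ (fun _ _ => rfl)
    rw [Finset.filter_filter]
    apply Finset.filter_congr
    intro y _; constructor
    · rintro ⟨_, h⟩; exact h
    · intro h; exact ⟨by rw [h]; exact lt_irrefl c, h⟩
  · apply Finset.sum_congr _ (fun _ _ => rfl)
    rw [Finset.filter_filter]
    apply Finset.filter_congr
    intro y _; constructor
    · rintro ⟨h1, h2⟩; exact lt_of_le_of_ne (not_lt.1 h1) (Ne.symm h2)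
    · intro h; exact ⟨not_lt.2 h.le, ne_of_gt h⟩

theorem slice_polytope (s : Finset E) (f : E →ₗ[ℝ] ℝ) (c : ℝ) :
    ∃ u : Finset E, convexHull ℝ (s : Set E) ∩ {x | f x = c} = convexHull ℝ (u : Set E) := by
  classical
  refine ⟨((s ×ˢ s).filter (fun q => f q.1 ≤ c ∧ c ≤ f q.2)).image
      (fun q => slicePt f c q.1 q.2), Set.Subset.antisymm ?_ ?_⟩
  · -- hard direction
    rintro x ⟨hx, hfx⟩
    rw [Finset.convexHull_eq] at hx
    obtain ⟨w, hw0, hw1, hwx⟩ := hx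
    rw [Finset.centerMass_eq_of_sum_1 _ _ hw1] at hwx
    simp only [id] at hwx
    simp only [Set.mem_setOf_eq] at hfx
    set u := ((s ×ˢ s).filter (fun q => f q.1 ≤ c ∧ c ≤ f q.2)).image
      (fun q => slicePt f c q.1 q.2) with hu
    set P := s.filter (fun y => f y < c) with hP
    set N := s.filter (fun y => c < f y) with hN
    set Z := s.filter (fun y => f y = c) with hZ
    set M := ∑ a ∈ P, w a * (c - f a) with hM
    -- total: ∑_{y∈s} w y * (c - f y) = 0
    have htot : ∑ y ∈ s, w y * (c - f y) = 0 := by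
      have hfs : f x = ∑ y ∈ s, w y * f y := by
        rw [← hwx, map_sum]; simp [map_smul]
      have : ∑ y ∈ s, w y * c = c := by
        rw [← Finset.sum_mul, hw1, one_mul]
      calc ∑ y ∈ s, w y * (c - f y) = (∑ y ∈ s, w y * c) - ∑ y ∈ s, w y * f y := by
            rw [← Finset.sum_sub_distrib]; exact Finset.sum_congr rfl (fun y _ => by ring)
        _ = c - f x := by rw [this, hfs]
        _ = 0 := by rw [hfx, sub_self]
    -- split s into P, Z, N
    have hsplit : ∀ g : E → ℝ, ∑ y ∈ s, g y = ∑ y ∈ P, g y + ∑ y ∈ Z, g y + ∑ y ∈ N, g y :=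
      fun g => sum_trichotomy s f c g
    have hsplitE : ∀ g : E → E, ∑ y ∈ s, g y = ∑ y ∈ P, g y + ∑ y ∈ Z, g y + ∑ y ∈ N, g y :=
      fun g => sum_trichotomy s f c g
    have hZ0 : ∀ g : E → ℝ, (∀ y ∈ Z, g y = w y * (c - f y)) → ∑ y ∈ Z, g y = 0 := by
      intro g hg
      apply Finset.sum_eq_zero
      intro y hy
      have := (Finset.mem_filter.1 hy).2
      rw [hg y hy, this, sub_self, mul_zero]
    have hMN : ∑ b ∈ N, w b * (f b - c) = M := by
      have h := hsplit (fun y => w y * (c - f y))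
      rw [htot] at h
      have hz : ∑ y ∈ Z, w y * (c - f y) = 0 := hZ0 _ (fun y _ => rfl)
      rw [hz] at h
      have : ∑ b ∈ N, w b * (f b - c) = - ∑ b ∈ N, w b * (c - f b) := by
        rw [← Finset.sum_neg_distrib]; apply Finset.sum_congr rfl; intros; ring
      rw [this, hM]; linarith
    have hM0 : 0 ≤ M := Finset.sum_nonneg (fun a ha => by
      have h1 := hw0 a (Finset.mem_of_mem_filter a ha)
      have h2 := (Finset.mem_filter.1 ha).2
      exact mul_nonneg h1 (by linarith))
    have huZ : ∀ a ∈ Z, a ∈ (u : Set E) := by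
      intro a ha
      have has : a ∈ s := Finset.mem_of_mem_filter a ha
      have hac : f a = c := (Finset.mem_filter.1 ha).2
      rw [hu]
      simp only [Finset.coe_image, Set.mem_image, Finset.mem_coe]
      refine ⟨(a, a), Finset.mem_filter.2 ⟨Finset.mem_product.2 ⟨has, has⟩, hac.le, hac.ge⟩, ?_⟩
      simp [slicePt]
    rcases eq_or_lt_of_le hM0 with hMz | hMpos
    · -- case M = 0
      have hPzero : ∀ a ∈ P, w a = 0 := by
        intro a ha
        have hnn : ∀ a ∈ P, 0 ≤ w a * (c - f a) := fun a ha =>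
          mul_nonneg (hw0 a (Finset.mem_of_mem_filter a ha))
            (by linarith [(Finset.mem_filter.1 ha).2])
        have h0 := (Finset.sum_eq_zero_iff_of_nonneg hnn).1 hMz.symm a ha
        have hpos : 0 < c - f a := by linarith [(Finset.mem_filter.1 ha).2]
        rcases mul_eq_zero.1 h0 with h | h
        · exact h
        · exact absurd h (ne_of_gt hpos)
      have hNzero : ∀ b ∈ N, w b = 0 := by
        intro b hb
        have hnn : ∀ b ∈ N, 0 ≤ w b * (f b - c) := fun b hb =>
          mul_nonneg (hw0 b (Finset.mem_of_mem_filter b hb))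
            (by linarith [(Finset.mem_filter.1 hb).2])
        have h0 := (Finset.sum_eq_zero_iff_of_nonneg hnn).1 (hMN.trans hMz.symm) b hb
        have hpos : 0 < f b - c := by linarith [(Finset.mem_filter.1 hb).2]
        rcases mul_eq_zero.1 h0 with h | h
        · exact h
        · exact absurd h (ne_of_gt hpos)
      have hZ1 : ∑ y ∈ Z, w y = 1 := by
        have h := hsplit w
        rw [hw1, Finset.sum_eq_zero hPzero, Finset.sum_eq_zero hNzero] at h
        linarith
      have hZx : ∑ y ∈ Z, w y • y = x := by
        have h := hsplitE (fun y => w y • y)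
        rw [hwx] at h
        have hp : ∑ a ∈ P, w a • a = (0:E) :=
          Finset.sum_eq_zero (fun a ha => by rw [hPzero a ha, zero_smul])
        have hn : ∑ b ∈ N, w b • b = (0:E) :=
          Finset.sum_eq_zero (fun b hb => by rw [hNzero b hb, zero_smul])
        rw [hp, hn] at h
        simpa using h.symm
      have := Finset.centerMass_mem_convexHull Z (fun y hy => hw0 y (Finset.mem_of_mem_filter y hy))
        (by rw [hZ1]; exact one_pos) (fun y hy => huZ y hy)
      rw [Finset.centerMass, hZ1, inv_one, one_smul] at this
      rwa [hZx] at this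
    · -- case 0 < M
      have hMne : M ≠ 0 := ne_of_gt hMpos
      classical
      set t : Finset (E × E) := (P ×ˢ N) ∪ Z.image (fun a => (a, a)) with ht
      set ν : E × E → ℝ := fun q => if q.1 = q.2 then M * w q.1 else w q.1 * w q.2 * (f q.2 - f q.1) with hν
      set z : E × E → E := fun q => slicePt f c q.1 q.2 with hz
      have hfa : ∀ a ∈ P, f a < c := fun a ha => (Finset.mem_filter.1 ha).2
      have hfb : ∀ b ∈ N, c < f b := fun b hb => (Finset.mem_filter.1 hb).2
      have hne : ∀ a ∈ P, ∀ b ∈ N, a ≠ b := by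
        intro a ha b hb h
        have := hfa a ha
        have := hfb b hb
        rw [h] at *; linarith
      have hdisj : Disjoint (P ×ˢ N) (Z.image (fun a => (a, a))) := by
        rw [Finset.disjoint_left]
        rintro ⟨a, b⟩ hab him
        simp only [Finset.mem_image] at him
        obtain ⟨y, _, hy⟩ := him
        have h1 := Finset.mem_product.1 hab
        obtain ⟨h2, h3⟩ := Prod.ext_iff.1 hy
        exact hne a h1.1 b h1.2 (h2.symm.trans h3)
      have hinj : ∀ a ∈ Z, ∀ b ∈ Z, (fun a => (a, a)) a = (fun a => (a, a)) b → a = b :=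
        fun a _ b _ h => (Prod.ext_iff.1 h).1
      -- sum of weights
      have hSN : ∑ b ∈ N, w b * (f b - c) = M := hMN
      have hinner : ∀ a ∈ P, ∑ b ∈ N, ν (a, b) = w a * M + (w a * (c - f a)) * ∑ b ∈ N, w b := by
        intro a ha
        have : ∀ b ∈ N, ν (a, b) = w a * (w b * (f b - c)) + (w a * (c - f a)) * w b := by
          intro b hb
          rw [hν]
          simp only [if_neg (hne a ha b hb)]
          ring
        rw [Finset.sum_congr rfl this, Finset.sum_add_distrib, ← Finset.mul_sum, hSN,
          ← Finset.mul_sum]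
      have hsumt : ∑ q ∈ t, ν q = M := by
        rw [ht, Finset.sum_union hdisj, Finset.sum_product, Finset.sum_image hinj]
        have hZpart : ∑ a ∈ Z, ν (a, a) = M * ∑ a ∈ Z, w a := by
          rw [Finset.mul_sum]
          exact Finset.sum_congr rfl (fun a _ => by rw [hν]; simp)
        rw [Finset.sum_congr rfl hinner, hZpart, Finset.sum_add_distrib, ← Finset.sum_mul,
          ← Finset.sum_mul]
        have h1 := hsplit w
        rw [hw1] at h1
        have hMsum : ∑ a ∈ P, w a * (c - f a) = M := hM.symm
        rw [hMsum]
        nlinarith [h1]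
      -- sum of weighted points
      have hterm : ∀ a ∈ P, ∀ b ∈ N, ν (a, b) • z (a, b)
          = (w a * (w b * (f b - c))) • a + ((w a * (c - f a)) * w b) • b := by
        intro a ha b hb
        have hab : f a < f b := lt_trans (hfa a ha) (hfb b hb)
        have hd : f b - f a ≠ 0 := sub_ne_zero.2 (ne_of_gt hab)
        rw [hz, hν]
        simp only [if_neg (hne a ha b hb)]
        rw [slicePt_eq_of_lt hab, smul_add, smul_smul, smul_smul]
        congr 1
        · congr 1
          field_simp
        · congr 1
          field_simp
      have hinnerv : ∀ a ∈ P, ∑ b ∈ N, ν (a, b) • z (a, b)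
          = (w a * M) • a + (w a * (c - f a)) • ∑ b ∈ N, w b • b := by
        intro a ha
        rw [Finset.sum_congr rfl (hterm a ha), Finset.sum_add_distrib]
        congr 1
        · rw [← Finset.sum_smul, ← Finset.mul_sum, hSN]
        · rw [Finset.smul_sum]
          exact Finset.sum_congr rfl (fun b _ => by rw [smul_smul])
      have hvect : ∑ q ∈ t, ν q • z q = M • x := by
        rw [ht, Finset.sum_union hdisj, Finset.sum_product, Finset.sum_image hinj]
        rw [Finset.sum_congr rfl hinnerv, Finset.sum_add_distrib]
        have h1 : ∑ a ∈ P, (w a * M) • a = M • ∑ a ∈ P, w a • a := by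
          rw [Finset.smul_sum]
          exact Finset.sum_congr rfl (fun a _ => by rw [smul_smul, mul_comm])
        have h2 : ∑ a ∈ P, (w a * (c - f a)) • ∑ b ∈ N, w b • b
            = M • ∑ b ∈ N, w b • b := by
          rw [← Finset.sum_smul, ← hM]
        have h3 : ∑ a ∈ Z, ν (a, a) • z (a, a) = M • ∑ a ∈ Z, w a • a := by
          rw [Finset.smul_sum]
          refine Finset.sum_congr rfl (fun a ha => ?_)
          have : ν (a, a) = M * w a := by rw [hν]; simp
          rw [this, hz]
          simp only [slicePt_self]
          rw [smul_smul]
        rw [h1, h2, h3, ← smul_add, ← smul_add]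
        congr 1
        have h := hsplitE (fun y => w y • y)
        rw [hwx] at h
        rw [h]
        abel
      have hν0 : ∀ q ∈ t, 0 ≤ ν q := by
        rintro ⟨a, b⟩ hq
        rw [ht, Finset.mem_union] at hq
        rcases hq with hq | hq
        · have h1 := Finset.mem_product.1 hq
          rw [hν]
          simp only [if_neg (hne a h1.1 b h1.2)]
          have := hfa a h1.1
          have := hfb b h1.2
          have := hw0 a (Finset.mem_of_mem_filter a h1.1)
          have := hw0 b (Finset.mem_of_mem_filter b h1.2)
          apply mul_nonneg (mul_nonneg ‹0 ≤ w a› ‹0 ≤ w b›)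
          linarith
        · simp only [Finset.mem_image] at hq
          obtain ⟨y, hy, hyq⟩ := hq
          have h1 : a = y ∧ b = y :=
            ⟨(Prod.ext_iff.1 hyq).1.symm, (Prod.ext_iff.1 hyq).2.symm⟩
          rw [h1.1, h1.2, hν]
          simp only [if_pos rfl]
          exact mul_nonneg hMpos.le (hw0 y (Finset.mem_of_mem_filter y hy))
      have hzmem : ∀ q ∈ t, z q ∈ (u : Set E) := by
        rintro ⟨a, b⟩ hq
        rw [ht, Finset.mem_union] at hq
        rcases hq with hq | hq
        · have h1 := Finset.mem_product.1 hq
          rw [hu]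
          simp only [Finset.coe_image, Set.mem_image, Finset.mem_coe]
          exact ⟨(a, b), Finset.mem_filter.2 ⟨Finset.mem_product.2
            ⟨Finset.mem_of_mem_filter a h1.1, Finset.mem_of_mem_filter b h1.2⟩,
            (hfa a h1.1).le, (hfb b h1.2).le⟩, rfl⟩
        · simp only [Finset.mem_image] at hq
          obtain ⟨y, hy, hyq⟩ := hq
          have h1 : a = y ∧ b = y :=
            ⟨(Prod.ext_iff.1 hyq).1.symm, (Prod.ext_iff.1 hyq).2.symm⟩
          rw [h1.1, h1.2]
          have := huZ y hy
          rw [hz]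
          simpa [slicePt_self] using this
      have hmem := Finset.centerMass_mem_convexHull t hν0 (by rw [hsumt]; exact hMpos) hzmem
      rwa [Finset.centerMass, hsumt, hvect, smul_smul, inv_mul_cancel₀ hMne, one_smul] at hmem
  · -- easy direction
    apply convexHull_min
    · intro y hy
      simp only [Finset.coe_image, Set.mem_image, Finset.mem_coe, Finset.mem_filter,
        Finset.mem_product] at hy
      obtain ⟨⟨a, b⟩, ⟨⟨ha, hb⟩, h1, h2⟩, rfl⟩ := hy
      exact slicePt_mem ha hb h1 h2
    · exact (convex_convexHull ℝ _).inter (convex_hyperplane (LinearMap.isLinear f) c)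

theorem slice_polytope_multi (s : Finset E) (m : ℕ) (f : Fin m → E →ₗ[ℝ] ℝ) (c : Fin m → ℝ) :
    ∃ u : Finset E,
      convexHull ℝ (s : Set E) ∩ {x | ∀ i, f i x = c i} = convexHull ℝ (u : Set E) := by
  induction m generalizing s with
  | zero => exact ⟨s, by simp⟩
  | succ m ih =>
    obtain ⟨u, hu⟩ := slice_polytope s (f 0) (c 0)
    obtain ⟨v, hv⟩ := ih u (fun i => f i.succ) (fun i => c i.succ)
    refine ⟨v, ?_⟩
    rw [← hv, ← hu]
    ext x
    simp only [Set.mem_inter_iff, Set.mem_setOf_eq, Fin.forall_fin_succ]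
    tauto

theorem polytope_inter {n : ℕ} (s t : Finset (Fin n → ℝ)) :
    ∃ u : Finset (Fin n → ℝ),
      convexHull ℝ (s : Set (Fin n → ℝ)) ∩ convexHull ℝ (t : Set (Fin n → ℝ))
        = convexHull ℝ (u : Set (Fin n → ℝ)) := by
  classical
  let E := Fin n → ℝ
  set f : Fin n → (E × E) →ₗ[ℝ] ℝ := fun i =>
    (LinearMap.proj i).comp (LinearMap.fst ℝ E E)
      - (LinearMap.proj i).comp (LinearMap.snd ℝ E E) with hf
  obtain ⟨u, hu⟩ := slice_polytope_multi (s ×ˢ t) n f (fun _ => 0)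
  refine ⟨u.image Prod.fst, ?_⟩
  have hdiag : {p : E × E | ∀ i, f i p = 0} = {p : E × E | p.1 = p.2} := by
    ext p
    simp only [hf, Set.mem_setOf_eq, LinearMap.sub_apply, LinearMap.comp_apply,
      LinearMap.fst_apply, LinearMap.snd_apply, LinearMap.proj_apply, sub_eq_zero]
    exact funext_iff.symm
  have key : convexHull ℝ (s : Set E) ∩ convexHull ℝ (t : Set E)
      = Prod.fst '' (convexHull ℝ ((s ×ˢ t : Finset (E × E)) : Set (E × E))
          ∩ {p | ∀ i, f i p = 0}) := by
    rw [hdiag, Finset.coe_product, convexHull_prod]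
    ext x
    constructor
    · rintro ⟨h1, h2⟩
      exact ⟨(x, x), ⟨⟨h1, h2⟩, rfl⟩, rfl⟩
    · rintro ⟨⟨a, b⟩, ⟨⟨h1, h2⟩, (hab : a = b)⟩, rfl⟩
      exact ⟨h1, hab ▸ h2⟩
  rw [key, hu,
    IsLinearMap.image_convexHull (⟨fun _ _ => rfl, fun _ _ => rfl⟩ : IsLinearMap ℝ (Prod.fst : E × E → E)),
    Finset.coe_image]


end Slice
end PolyAux

section Machinery
open Bornology

variable {E : Type*} [AddCommGroup E] [Module ℝ E]

lemma convexHull_translate (v : E) (s : Set E) :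
    (fun x => v + x) '' convexHull ℝ s = convexHull ℝ ((fun x => v + x) '' s) := by
  have h := (AffineEquiv.constVAdd ℝ E v).toAffineMap.image_convexHull s
  have hc : ⇑(AffineEquiv.constVAdd ℝ E v).toAffineMap = fun x => v + x := by
    funext x
    rfl
  rw [hc] at h
  exact h

lemma IsPolytope.inter' {n : ℕ} {P Q : Set (Fin n → ℝ)} (hP : IsPolytope P)
    (hQ : IsPolytope Q) : IsPolytope (P ∩ Q) := by
  obtain ⟨s, rfl⟩ := hP
  obtain ⟨t, rfl⟩ := hQ
  obtain ⟨u, hu⟩ := polytope_inter s t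
  exact ⟨u, hu⟩

lemma IsPolytope.translate' {n : ℕ} {P : Set (Fin n → ℝ)} (hP : IsPolytope P)
    (v : Fin n → ℝ) : IsPolytope ((fun x => v + x) '' P) := by
  classical
  obtain ⟨s, rfl⟩ := hP
  exact ⟨s.image (fun x => v + x), by rw [convexHull_translate, Finset.coe_image]⟩

lemma isFinUnion_iUnion {n : ℕ} {ι : Type} [Fintype ι] (A : ι → Set (Fin n → ℝ))
    (h : ∀ i, IsFinUnionOfPolytopes (A i)) : IsFinUnionOfPolytopes (⋃ i, A i) := by
  choose k P hP hA using h
  let σ := Σ i : ι, Fin (k i)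
  let e := (Fintype.equivFin σ).symm
  refine ⟨Fintype.card σ, fun m => P (e m).1 (e m).2, fun m => hP _ _, ?_⟩
  calc ⋃ i, A i = ⋃ i, ⋃ j, P i j := Set.iUnion_congr hA
    _ = ⋃ p : σ, P p.1 p.2 := Set.iUnion_sigma' P
    _ = ⋃ m, P (e m).1 (e m).2 := (e.surjective.iUnion_comp fun p => P p.1 p.2).symm

lemma IsPolytope.isFinUnion {n : ℕ} {P : Set (Fin n → ℝ)} (h : IsPolytope P) :
    IsFinUnionOfPolytopes P :=
  ⟨1, fun _ => P, fun _ => h, (Set.iUnion_const P).symm⟩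

lemma IsFinUnionOfPolytopes.inter' {n : ℕ} {A B : Set (Fin n → ℝ)}
    (hA : IsFinUnionOfPolytopes A) (hB : IsFinUnionOfPolytopes B) :
    IsFinUnionOfPolytopes (A ∩ B) := by
  obtain ⟨k, P, hP, rfl⟩ := hA
  obtain ⟨l, Q, hQ, rfl⟩ := hB
  have h : (⋃ i, P i) ∩ (⋃ j, Q j) = ⋃ p : Fin k × Fin l, P p.1 ∩ Q p.2 := by
    ext x
    simp only [Set.mem_inter_iff, Set.mem_iUnion, Prod.exists]
    tauto
  rw [h]
  exact isFinUnion_iUnion _ (fun p => ((hP p.1).inter' (hQ p.2)).isFinUnion)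

lemma IsFinUnionOfPolytopes.translate' {n : ℕ} {A : Set (Fin n → ℝ)}
    (h : IsFinUnionOfPolytopes A) (v : Fin n → ℝ) :
    IsFinUnionOfPolytopes ((fun x => v + x) '' A) := by
  obtain ⟨k, P, hP, rfl⟩ := h
  exact ⟨k, fun i => (fun x => v + x) '' P i, fun i => (hP i).translate' v,
    by rw [Set.image_iUnion]⟩

lemma IsFinUnionOfPolytopes.bounded {n : ℕ} {A : Set (Fin n → ℝ)}
    (h : IsFinUnionOfPolytopes A) : IsBounded A := by
  obtain ⟨k, P, hP, rfl⟩ := h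
  refine Bornology.isBounded_iUnion.2 (fun i => ?_)
  obtain ⟨s, hs⟩ := hP i
  rw [hs]
  exact isBounded_convexHull.2 s.finite_toSet.isBounded

lemma lattice_bounded_finite (n : ℕ) {C : Set (Fin n → ℝ)} (hC : IsBounded C) :
    ((intLattice n : Set (Fin n → ℝ)) ∩ C).Finite := by
  classical
  obtain ⟨r, hr⟩ := (Metric.isBounded_iff_subset_closedBall 0).1 hC
  have hsub : (intLattice n : Set (Fin n → ℝ)) ∩ C ⊆
      (fun m : Fin n → ℤ => fun i => (m i : ℝ)) ''
        (Set.pi Set.univ fun _ : Fin n => (Set.Icc (-⌈r⌉) ⌈r⌉ : Set ℤ)) := by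
    rintro x ⟨hxl, hxC⟩
    have hxl' : ∀ i, ∃ m : ℤ, x i = (m : ℝ) := hxl
    choose m hm using hxl'
    have hxr : ‖x‖ ≤ r := by
      have := hr hxC
      rwa [Metric.mem_closedBall, dist_zero_right] at this
    refine ⟨m, fun i _ => ?_, by funext i; exact (hm i).symm⟩
    have h1 : |x i| ≤ r := le_trans (norm_le_pi_norm x i) hxr
    have h2 := abs_le.1 h1
    have hceil := Int.le_ceil r
    constructor
    · have : -((⌈r⌉ : ℤ) : ℝ) ≤ (m i : ℝ) := by rw [← hm i]; linarith
      exact_mod_cast neg_le.1 (neg_le.2 this)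
    · have : (m i : ℝ) ≤ ((⌈r⌉ : ℤ) : ℝ) := by rw [← hm i]; linarith
      exact_mod_cast this
  exact Set.Finite.subset (Set.Finite.image _
    (Set.Finite.pi fun _ => Set.finite_Icc _ _)) hsub

lemma image_inter_image (n : ℕ) (A B : Set (Fin n → ℝ)) :
    torusPi n '' A ∩ torusPi n '' B
      = torusPi n '' (⋃ v ∈ (intLattice n : Set (Fin n → ℝ)), A ∩ (fun x => v + x) '' B) := by
  ext q
  constructor
  · rintro ⟨⟨a, ha, rfl⟩, ⟨b, hb, hba⟩⟩
    obtain ⟨z, hz, hza⟩ := (QuotientAddGroup.mk'_eq_mk' (intLattice n)).mp hba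
    refine ⟨a, Set.mem_biUnion hz ⟨ha, b, hb, ?_⟩, rfl⟩
    rw [← hza]; abel
  · rintro ⟨a, hmem, rfl⟩
    obtain ⟨v, hv, ha, b, hb, hba⟩ := by
      simpa only [Set.mem_iUnion, Set.mem_inter_iff, Set.mem_image, exists_prop] using hmem
    refine ⟨⟨a, ha, rfl⟩, b, hb, ?_⟩
    exact (QuotientAddGroup.mk'_eq_mk' (intLattice n)).mpr ⟨v, hv, by rw [← hba]; abel⟩

lemma biUnion_restrict (n : ℕ) {A B : Set (Fin n → ℝ)} (hA : IsBounded A) (hB : IsBounded B) :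
    ∃ F : Finset (Fin n → ℝ), (∀ v ∈ F, v ∈ (intLattice n : Set (Fin n → ℝ))) ∧
      (⋃ v ∈ (intLattice n : Set (Fin n → ℝ)), A ∩ (fun x => v + x) '' B)
        = ⋃ v ∈ F, A ∩ (fun x => v + x) '' B := by
  classical
  have hfin : ((intLattice n : Set (Fin n → ℝ)) ∩ (A - B)).Finite :=
    lattice_bounded_finite n (isBounded_sub hA hB)
  refine ⟨hfin.toFinset, fun v hv => ((Set.Finite.mem_toFinset hfin).1 hv).1, ?_⟩
  apply Set.Subset.antisymm
  · rintro x hx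
    obtain ⟨v, hv, hxA, b, hb, hxb⟩ := by
      simpa only [Set.mem_iUnion, Set.mem_inter_iff, Set.mem_image, exists_prop] using hx
    have hvAB : v ∈ A - B := ⟨x, hxA, b, hb, by rw [← hxb]; exact add_sub_cancel_right v b⟩
    refine Set.mem_biUnion ((Set.Finite.mem_toFinset hfin).2 ⟨hv, hvAB⟩) ⟨hxA, b, hb, hxb⟩
  · rintro x hx
    obtain ⟨v, hv, hxA, b, hb, hxb⟩ := by
      simpa only [Set.mem_iUnion, Set.mem_inter_iff, Set.mem_image, exists_prop] using hx
    exact Set.mem_biUnion (((Set.Finite.mem_toFinset hfin).1 hv).1) ⟨hxA, b, hb, hxb⟩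

lemma IsPolyhedral.inter' {n : ℕ} {S T : Set (Torus n)} (hS : IsPolyhedral S)
    (hT : IsPolyhedral T) : IsPolyhedral (S ∩ T) := by
  obtain ⟨A, hA, rfl⟩ := hS
  obtain ⟨B, hB, rfl⟩ := hT
  obtain ⟨F, hFmem, hF⟩ := biUnion_restrict n hA.bounded hB.bounded
  refine ⟨⋃ v ∈ F, A ∩ (fun x => v + x) '' B, ?_, by rw [image_inter_image, hF]⟩
  have h : (⋃ v ∈ F, A ∩ (fun x => v + x) '' B)
      = ⋃ v : {x // x ∈ F}, A ∩ (fun x => (v : Fin n → ℝ) + x) '' B := by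
    ext x
    simp only [Set.mem_iUnion, Subtype.exists, exists_prop]
  rw [h]
  exact isFinUnion_iUnion _ (fun v => hA.inter' (hB.translate' v.1))

lemma isPolyhedral_univ (n : ℕ) (hn : 0 < n) :
    IsPolyhedral (Set.univ : Set (Torus n)) := by
  classical
  have hcpos : (0 : ℝ) < (n : ℝ) := by exact_mod_cast hn
  set c : ℝ := (n : ℝ) with hc
  set s : Finset (Fin n → ℝ) :=
    insert 0 (Finset.univ.image fun i : Fin n => c • fun j => if i = j then (1:ℝ) else 0)
    with hs
  refine ⟨convexHull ℝ (s : Set (Fin n → ℝ)), IsPolytope.isFinUnion ⟨s, rfl⟩, ?_⟩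
  apply Set.Subset.antisymm _ (Set.subset_univ _)
  intro q _
  obtain ⟨y, rfl⟩ := QuotientAddGroup.mk'_surjective (intLattice n) q
  set a : Fin n → ℝ := fun i => Int.fract (y i) with ha
  have hmem : a ∈ convexHull ℝ (s : Set (Fin n → ℝ)) := by
    have h0 : ∀ i, 0 ≤ a i := fun i => Int.fract_nonneg _
    have h1 : ∀ i, a i ≤ 1 := fun i => (Int.fract_lt_one _).le
    have hsum : ∑ i, a i ≤ c := by
      calc ∑ i, a i ≤ ∑ _i : Fin n, (1:ℝ) := Finset.sum_le_sum (fun i _ => h1 i)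
        _ = c := by simp [hc]
    set w : Option (Fin n) → ℝ :=
      fun o => Option.rec (1 - (∑ i, a i)/c) (fun i => a i / c) o with hw
    set z : Option (Fin n) → (Fin n → ℝ) :=
      fun o => Option.rec 0 (fun i => c • fun j => if i = j then (1:ℝ) else 0) o with hz
    apply mem_convexHull_of_exists_fintype w z
    · rintro (_|i)
      · have hle : (∑ i, a i)/c ≤ 1 := by
          rw [div_le_one hcpos]; exact hsum
        simp only [hw]
        linarith
      · exact div_nonneg (h0 i) hcpos.le
    · rw [Fintype.sum_option]
      simp only [hw]
      rw [← Finset.sum_div]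
      ring
    · rintro (_|i)
      · simp [hz, hs]
      · simp only [hz, hs, Finset.coe_insert, Set.mem_insert_iff, Finset.coe_image,
          Set.mem_image, Finset.mem_coe, Finset.mem_univ]
        right
        exact ⟨i, trivial, rfl⟩
    · rw [Fintype.sum_option]
      simp only [hw, hz]
      rw [smul_zero, zero_add]
      have key : ∀ i : Fin n,
          (a i / c) • (c • fun j => if i = j then (1:ℝ) else 0)
            = a i • fun j => if i = j then (1:ℝ) else 0 := by
        intro i
        rw [smul_smul, div_mul_cancel₀ _ (ne_of_gt hcpos)]
      rw [Finset.sum_congr rfl (fun i _ => key i)]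
      exact (pi_eq_sum_univ a).symm
  refine ⟨a, hmem, ?_⟩
  refine (QuotientAddGroup.mk'_eq_mk' (intLattice n)).mpr
    ⟨fun i => ((⌊y i⌋ : ℤ) : ℝ), fun i => ⟨⌊y i⌋, rfl⟩, ?_⟩
  funext i
  simp only [ha, Pi.add_apply]
  exact Int.fract_add_floor (y i)

end Machinery


/-- The intersection of any finite family of polyhedral subsets of the torus
T = ℝⁿ/ℤⁿ is polyhedral. -/

theorem isPolyhedral_iInter (n : ℕ) (hn : 0 < n) (k : ℕ)
    (S : Fin k → Set (Torus n)) (hS : ∀ i, IsPolyhedral (S i)) :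
    IsPolyhedral (⋂ i, S i) := by
  induction k with
  | zero =>
    rw [Set.iInter_of_empty]
    exact isPolyhedral_univ n hn
  | succ k ih =>
    have h1 : (⋂ i, S i) = S 0 ∩ ⋂ i : Fin k, S i.succ := by
      ext q
      simp only [Set.mem_iInter, Set.mem_inter_iff, Fin.forall_fin_succ]
    rw [h1]
    exact (hS 0).inter' (ih (fun i => S i.succ) (fun i => hS i.succ))
end

section
/- Let n be a positive integer and let s and t be finite subsets of ℝⁿ. Then there exists a finite subset u of ℝⁿ such that the intersection of the convex hull of s with the convex hull of t equals the convex hull of u. In other words, the intersection of two polytopes in ℝⁿ is a polytope. -/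
open Set

section Aux

open Finset

/-- Slicing the convex hull of a finite set by a hyperplane gives the convex
hull of a finite set. -/
lemma convexHull_inter_hyperplane {E : Type*} [AddCommGroup E] [Module ℝ E] [DecidableEq E]
    (f : E →ₗ[ℝ] ℝ) (c : ℝ) (s : Finset E) :
    ∃ u : Finset E,
      convexHull ℝ (s : Set E) ∩ {x | f x = c} = convexHull ℝ (u : Set E) := by
  classical
  set p : E × E → E := fun q =>
    ((f q.2 - c) / (f q.2 - f q.1)) • q.1 + ((c - f q.1) / (f q.2 - f q.1)) • q.2 with hp
  set A : Finset E := s.filter (fun a => f a ≤ c) with hA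
  set B : Finset E := s.filter (fun b => ¬ f b ≤ c) with hB
  have hmemA : ∀ a ∈ A, a ∈ s ∧ f a ≤ c := by
    intro a ha; simpa [hA, Finset.mem_filter] using ha
  have hmemB : ∀ b ∈ B, b ∈ s ∧ c < f b := by
    intro b hb
    have := Finset.mem_filter.1 (hB ▸ hb)
    exact ⟨this.1, lt_of_not_ge this.2⟩
  refine ⟨(A ×ˢ B).image p ∪ s.filter (fun a => f a = c), ?_⟩
  apply Set.Subset.antisymm
  · -- hard direction
    rintro x ⟨hxs, hxc⟩
    have hxc : f x = c := hxc
    rw [Finset.mem_convexHull'] at hxs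
    obtain ⟨w, hw₀, hw₁, hwx⟩ := hxs
    have hfx : ∑ y ∈ s, w y * f y = c := by
      have := congrArg f hwx
      simpa [map_sum, map_smul, smul_eq_mul, hxc] using this
    set D : ℝ := ∑ a ∈ A, w a * (c - f a) with hD
    have hsplit : ∀ F : E → ℝ, (∑ y ∈ A, F y) + (∑ y ∈ B, F y) = ∑ y ∈ s, F y := fun F =>
      Finset.sum_filter_add_sum_filter_not s _ F
    have hzero : (∑ y ∈ A, w y * (c - f y)) + (∑ y ∈ B, w y * (c - f y)) = 0 := by
      rw [hsplit]
      have : ∑ y ∈ s, w y * (c - f y) = c * (∑ y ∈ s, w y) - ∑ y ∈ s, w y * f y := by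
        rw [Finset.mul_sum, ← Finset.sum_sub_distrib]; apply Finset.sum_congr rfl; intros; ring
      rw [this, hw₁, hfx]; ring
    have hD' : ∑ b ∈ B, w b * (f b - c) = D := by
      have : ∑ b ∈ B, w b * (f b - c) = -(∑ y ∈ B, w y * (c - f y)) := by
        rw [← Finset.sum_neg_distrib]; apply Finset.sum_congr rfl; intros; ring
      rw [this]; linarith [hzero]
    have hDnn : 0 ≤ D := by
      apply Finset.sum_nonneg
      intro a ha
      have := hmemA a ha
      exact mul_nonneg (hw₀ a this.1) (by linarith [this.2])
    rcases eq_or_lt_of_le hDnn with hD0 | hDpos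
    · -- degenerate case : all the mass is on the hyperplane
      have hkey : ∀ y ∈ s, w y ≠ 0 → f y = c := by
        intro y hy hwy
        by_cases hyc : f y ≤ c
        · have hyA : y ∈ A := Finset.mem_filter.2 ⟨hy, hyc⟩
          have := (Finset.sum_eq_zero_iff_of_nonneg ?_).1 hD0.symm y hyA
          · have : c - f y = 0 := by
              rcases mul_eq_zero.1 this with h | h
              · exact absurd h hwy
              · exact h
            linarith
          · intro a ha
            have := hmemA a ha
            exact mul_nonneg (hw₀ a this.1) (by linarith [this.2])
        · have hyB : y ∈ B := Finset.mem_filter.2 ⟨hy, hyc⟩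
          have hBz : ∑ b ∈ B, w b * (f b - c) = 0 := by rw [hD']; exact hD0.symm
          have := (Finset.sum_eq_zero_iff_of_nonneg ?_).1 hBz y hyB
          · have hyc' := (hmemB y hyB).2
            rcases mul_eq_zero.1 this with h | h
            · exact absurd h hwy
            · linarith
          · intro b hb
            have := hmemB b hb
            exact mul_nonneg (hw₀ b this.1) (by linarith [this.2])
      have h1 : ∑ y ∈ s.filter (fun a => f a = c), w y = 1 := by
        rw [Finset.sum_filter_of_ne (fun y hy hwy => hkey y hy hwy), hw₁]
      have h2 : ∑ y ∈ s.filter (fun a => f a = c), w y • y = x := by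
        rw [Finset.sum_filter_of_ne, hwx]
        intro y hy hwy
        exact hkey y hy (fun h => hwy (by simp [h]))
      have : x ∈ convexHull ℝ ((s.filter (fun a => f a = c) : Finset E) : Set E) := by
        rw [Finset.mem_convexHull']
        exact ⟨w, fun y hy => hw₀ y (Finset.mem_filter.1 hy).1, h1, h2⟩
      refine convexHull_mono ?_ this
      exact_mod_cast Finset.coe_subset.2 Finset.subset_union_right
    · -- main case
      set W : E × E → ℝ := fun q => w q.1 * w q.2 * (f q.2 - f q.1) / D with hW
      have hDne : D ≠ 0 := ne_of_gt hDpos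
      have hW₀ : ∀ q ∈ A ×ˢ B, 0 ≤ W q := by
        rintro ⟨a, b⟩ hq
        rw [Finset.mem_product] at hq
        have ha := hmemA a hq.1
        have hb := hmemB b hq.2
        apply div_nonneg _ hDnn
        · exact mul_nonneg (mul_nonneg (hw₀ a ha.1) (hw₀ b hb.1)) (by linarith [ha.2, hb.2])
      have hWsum : ∑ q ∈ A ×ˢ B, W q = 1 := by
        have hinner : ∀ a ∈ A, ∑ b ∈ B, w a * w b * (f b - f a)
            = w a * D + (w a * (c - f a)) * (∑ b ∈ B, w b) := by
          intro a _
          rw [← hD', Finset.mul_sum, Finset.mul_sum, ← Finset.sum_add_distrib]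
          apply Finset.sum_congr rfl
          intros; ring
        have hN : ∑ q ∈ A ×ˢ B, w q.1 * w q.2 * (f q.2 - f q.1) = D := by
          rw [Finset.sum_product]
          calc ∑ a ∈ A, ∑ b ∈ B, w a * w b * (f b - f a)
              = ∑ a ∈ A, (w a * D + (w a * (c - f a)) * (∑ b ∈ B, w b)) :=
                Finset.sum_congr rfl hinner
            _ = (∑ a ∈ A, w a) * D + D * (∑ b ∈ B, w b) := by
                rw [Finset.sum_add_distrib, ← Finset.sum_mul, ← Finset.sum_mul, ← hD]; try ring
            _ = D * ((∑ a ∈ A, w a) + (∑ b ∈ B, w b)) := by ring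
            _ = D := by rw [hsplit, hw₁, mul_one]
        simp only [hW]
        rw [← Finset.sum_div, hN, div_self hDne]
      have hterm : ∀ q ∈ A ×ˢ B, W q • p q
          = (w q.1 * w q.2 * (f q.2 - c) / D) • q.1
            + (w q.1 * w q.2 * (c - f q.1) / D) • q.2 := by
        rintro ⟨a, b⟩ hq
        rw [Finset.mem_product] at hq
        have ha := hmemA a hq.1
        have hb := hmemB b hq.2
        have hne : f b - f a ≠ 0 := by
          have : f a < f b := lt_of_le_of_lt ha.2 hb.2
          intro h; rw [sub_eq_zero] at h; exact absurd h (ne_of_gt this)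
        simp only [hp, hW, smul_add, smul_smul]
        congr 1
        · congr 1
          field_simp
          try ring
        · congr 1
          field_simp
          try ring
      have hctr : ∑ q ∈ A ×ˢ B, W q • p q = x := by
        rw [Finset.sum_congr rfl hterm, Finset.sum_add_distrib]
        have h1 : ∑ q ∈ A ×ˢ B, (w q.1 * w q.2 * (f q.2 - c) / D) • q.1
            = ∑ a ∈ A, w a • a := by
          rw [Finset.sum_product]
          apply Finset.sum_congr rfl
          intro a _
          have : ∑ b ∈ B, (w a * w b * (f b - c) / D) • a
              = ((∑ b ∈ B, w b * (f b - c)) * w a / D) • a := by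
            rw [← Finset.sum_smul]
            congr 1
            rw [Finset.sum_mul, Finset.sum_div]
            apply Finset.sum_congr rfl
            intros; ring
          rw [this, hD', mul_comm, mul_div_assoc, div_self hDne, mul_one]
        have h2 : ∑ q ∈ A ×ˢ B, (w q.1 * w q.2 * (c - f q.1) / D) • q.2
            = ∑ b ∈ B, w b • b := by
          rw [Finset.sum_product_right]
          apply Finset.sum_congr rfl
          intro b _
          have : ∑ a ∈ A, (w a * w b * (c - f a) / D) • b
              = ((∑ a ∈ A, w a * (c - f a)) * w b / D) • b := by
            rw [← Finset.sum_smul]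
            congr 1
            rw [Finset.sum_mul, Finset.sum_div]
            apply Finset.sum_congr rfl
            intros; ring
          rw [this, ← hD, mul_comm, mul_div_assoc, div_self hDne, mul_one]
        rw [h1, h2, Finset.sum_filter_add_sum_filter_not s (fun a => f a ≤ c) (fun y => w y • y), hwx]
      have hmem : ∀ q ∈ A ×ˢ B, p q ∈
          (((A ×ˢ B).image p ∪ s.filter (fun a => f a = c) : Finset E) : Set E) := by
        intro q hq
        exact_mod_cast Finset.mem_union_left _ (Finset.mem_image_of_mem p hq)
      have := Finset.centerMass_mem_convexHull (A ×ˢ B) hW₀ (by rw [hWsum]; norm_num) hmem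
      rwa [Finset.centerMass_eq_of_sum_1 _ _ hWsum, hctr] at this
  · -- easy direction
    rw [Finset.coe_union]
    apply convexHull_min
    · apply Set.union_subset
      · rintro y hy
        rw [Finset.coe_image, Set.mem_image] at hy
        obtain ⟨q, hq, rfl⟩ := hy
        rw [Finset.mem_coe, Finset.mem_product] at hq
        have ha := hmemA q.1 hq.1
        have hb := hmemB q.2 hq.2
        have hlt : f q.1 < f q.2 := lt_of_le_of_lt ha.2 hb.2
        have hne : f q.2 - f q.1 ≠ 0 := sub_ne_zero.2 hlt.ne'
        constructor
        · have h1 : q.1 ∈ convexHull ℝ (s : Set E) := subset_convexHull ℝ _ (by exact_mod_cast ha.1)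
          have h2 : q.2 ∈ convexHull ℝ (s : Set E) := subset_convexHull ℝ _ (by exact_mod_cast hb.1)
          exact (convex_convexHull ℝ (s : Set E)) h1 h2
            (div_nonneg (by linarith [hb.2]) (by linarith))
            (div_nonneg (by linarith [ha.2]) (by linarith))
            (by field_simp; ring)
        · show f _ = c
          simp only [hp, map_add, map_smul, smul_eq_mul]
          field_simp
          ring
      · intro y hy
        rw [Finset.mem_coe, Finset.mem_filter] at hy
        exact ⟨subset_convexHull ℝ _ (by exact_mod_cast hy.1), hy.2⟩
    · exact (convex_convexHull ℝ (s : Set E)).inter (convex_hyperplane f.isLinear c)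

/-- Slicing the convex hull of a finite set by finitely many hyperplanes gives the
convex hull of a finite set. -/
lemma convexHull_inter_hyperplanes {E : Type*} [AddCommGroup E] [Module ℝ E] [DecidableEq E]
    {ι : Type*} (F : Finset ι) (f : ι → E →ₗ[ℝ] ℝ) (c : ι → ℝ) (s : Finset E) :
    ∃ u : Finset E,
      convexHull ℝ (s : Set E) ∩ (⋂ i ∈ F, {x | f i x = c i}) = convexHull ℝ (u : Set E) := by
  classical
  induction F using Finset.induction generalizing s with
  | empty => exact ⟨s, by simp⟩
  | @insert i F hi ih =>
    obtain ⟨u', hu'⟩ := ih s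
    obtain ⟨u, hu⟩ := convexHull_inter_hyperplane (f i) (c i) u'
    refine ⟨u, ?_⟩
    rw [Finset.set_biInter_insert]
    rw [show convexHull ℝ (s : Set E) ∩ ({x | f i x = c i} ∩ ⋂ j ∈ F, {x | f j x = c j})
        = (convexHull ℝ (s : Set E) ∩ ⋂ j ∈ F, {x | f j x = c j}) ∩ {x | f i x = c i} by
      ext x; simp [Set.mem_inter_iff]; tauto]
    rw [hu', hu]

theorem polytope_inter_polytope_aux (n : ℕ)
    (s t : Finset (Fin n → ℝ)) :
    ∃ u : Finset (Fin n → ℝ),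
      convexHull ℝ (s : Set (Fin n → ℝ)) ∩ convexHull ℝ (t : Set (Fin n → ℝ)) =
        convexHull ℝ (u : Set (Fin n → ℝ)) := by
  classical
  set E := (Fin n → ℝ) × (Fin n → ℝ)
  set g : Fin n → E →ₗ[ℝ] ℝ := fun i =>
    (LinearMap.proj i).comp (LinearMap.fst ℝ _ _) - (LinearMap.proj i).comp (LinearMap.snd ℝ _ _)
    with hg
  obtain ⟨u', hu'⟩ := convexHull_inter_hyperplanes (Finset.univ : Finset (Fin n))
    g (fun _ => 0) (s ×ˢ t)
  refine ⟨u'.image Prod.fst, ?_⟩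
  have him : (Prod.fst : E → Fin n → ℝ) ''
      (convexHull ℝ ((s ×ˢ t : Finset E) : Set E) ∩ ⋂ i ∈ Finset.univ, {x | g i x = 0})
      = convexHull ℝ (s : Set (Fin n → ℝ)) ∩ convexHull ℝ (t : Set (Fin n → ℝ)) := by
    ext x
    rw [Finset.coe_product, convexHull_prod]
    simp only [Set.mem_image, Set.mem_inter_iff, Set.mem_iInter, Set.mem_setOf_eq,
      Finset.mem_univ, forall_true_left, Finset.coe_product, convexHull_prod, Set.mem_prod,
      hg, LinearMap.sub_apply, LinearMap.comp_apply, LinearMap.proj_apply, LinearMap.fst_apply,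
      LinearMap.snd_apply, sub_eq_zero, true_implies]
    constructor
    · rintro ⟨⟨a, b⟩, ⟨⟨ha, hb⟩, hab⟩, rfl⟩
      have : a = b := funext hab
      exact ⟨ha, this ▸ hb⟩
    · rintro ⟨h1, h2⟩
      exact ⟨(x, x), ⟨⟨h1, h2⟩, fun _ => rfl⟩, rfl⟩
  rw [← him, hu', Finset.coe_image]
  exact (LinearMap.fst ℝ (Fin n → ℝ) (Fin n → ℝ)).image_convexHull _


end Aux

/-- The intersection of two polytopes in ℝⁿ is a polytope: if s and t are
finite subsets of ℝⁿ, there is a finite subset u of ℝⁿ such that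
conv(s) ∩ conv(t) = conv(u). -/
theorem polytope_inter_polytope (n : ℕ) (hn : 0 < n)
    (s t : Finset (Fin n → ℝ)) :
    ∃ u : Finset (Fin n → ℝ),
      convexHull ℝ (s : Set (Fin n → ℝ)) ∩ convexHull ℝ (t : Set (Fin n → ℝ)) =
        convexHull ℝ (u : Set (Fin n → ℝ)) :=
  polytope_inter_polytope_aux n s t
end
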